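/- Let d ≥ 2, let D = D(M) be a conic domain, and let ψ : D → ℝ be infinitely differentiable with c₁ ρ(x) ≤ ψ(x) ≤ c₂ ρ(x) on D for some constants c₂ ≥ c₁ > 0 and with C_k := sup_{x ∈ D} ρ(x)^k ‖D^{k+1} ψ(x)‖ < ∞ for every k ∈ ℕ. Let p ∈ (1, ∞), θ, Θ, μ ∈ ℝ and m ∈ ℕ. Then there exists a constant N ≥ 1, depending only on d, p, m, θ, Θ, μ, c₁, c₂ and C₀, …, C_{m−1}, such that for every function f that is m times continuously differentiable on D, N^{−1} ‖f‖_{K^m_{p, θ+μp, Θ+μp}(D)} ≤ ‖ψ^μ f‖_{K^m_{p, θ, Θ}(D)} ≤ N ‖f‖_{K^m_{p, θ+μp, Θ+μp}(D)}. -/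

import Mathlib

open MeasureTheory ENNReal

/-- The conic domain `D(M) = {x ∈ ℝ^d \ {0} : x/|x| ∈ M}` determined by a subset `M` of
the unit sphere `S^(d−1)`. -/
def conicDomain (d : ℕ) (M : Set (EuclideanSpace ℝ (Fin d))) :
    Set (EuclideanSpace ℝ (Fin d)) :=
  {x | x ≠ 0 ∧ ‖x‖⁻¹ • x ∈ M}

/-- `ρ(x) = dist(x, ∂D)`, the distance to the boundary of `D`. -/
noncomputable def bdist (d : ℕ) (D : Set (EuclideanSpace ℝ (Fin d)))
    (x : EuclideanSpace ℝ (Fin d)) : ℝ :=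
  Metric.infDist x (frontier D)

/-- The weighted Sobolev norm
`‖f‖_{K^m_{p,θ,Θ}(D)} = Σ_{k=0}^m (∫_D (ρ^k ‖D^k f‖)^p ρ∘^(θ−Θ) ρ^(Θ−d) dx)^(1/p)`,
valued in `[0,∞]`, where `ρ∘(x) = |x|` and `ρ(x) = dist(x, ∂D)`. -/
noncomputable def Knorm (d : ℕ) (D : Set (EuclideanSpace ℝ (Fin d))) (p θ Θ : ℝ) (m : ℕ)
    (f : EuclideanSpace ℝ (Fin d) → ℝ) : ℝ≥0∞ :=
  ∑ k ∈ Finset.range (m + 1),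
    (∫⁻ x in D,
        ENNReal.ofReal
          ((bdist d D x ^ k * ‖iteratedFDerivWithin ℝ k f D x‖) ^ p *
            (‖x‖ ^ (θ - Θ) * bdist d D x ^ (Θ - (d : ℝ))))) ^ (1 / p)

section StmtSixAux

open Metric Set Finset

variable {d : ℕ}

lemma isOpen_conic {M U : Set (EuclideanSpace ℝ (Fin d))} (hU : IsOpen U)
    (hM : M = U ∩ Metric.sphere (0 : EuclideanSpace ℝ (Fin d)) 1) :
    IsOpen {x : EuclideanSpace ℝ (Fin d) | x ≠ 0 ∧ ‖x‖⁻¹ • x ∈ M} := by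
  have heq : {x : EuclideanSpace ℝ (Fin d) | x ≠ 0 ∧ ‖x‖⁻¹ • x ∈ M}
      = {(0 : EuclideanSpace ℝ (Fin d))}ᶜ ∩ (fun x : EuclideanSpace ℝ (Fin d) => ‖x‖⁻¹ • x) ⁻¹' U := by
    ext x
    simp only [Set.mem_setOf_eq, Set.mem_inter_iff, Set.mem_compl_iff, Set.mem_singleton_iff,
      Set.mem_preimage, hM, Set.mem_inter_iff]
    constructor
    · rintro ⟨hx, hxU, _⟩; exact ⟨hx, hxU⟩
    · rintro ⟨hx, hxU⟩
      refine ⟨hx, hxU, ?_⟩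
      rw [mem_sphere_zero_iff_norm, norm_smul, norm_inv, norm_norm,
        inv_mul_cancel₀ (norm_ne_zero_iff.mpr hx)]
  rw [heq]
  refine ContinuousOn.isOpen_inter_preimage ?_ ?_ hU
  · exact (continuousOn_id.norm.inv₀ (fun x hx => norm_ne_zero_iff.mpr hx)).smul continuousOn_id
  · exact isOpen_compl_singleton

lemma zero_mem_frontier_conic {M : Set (EuclideanSpace ℝ (Fin d))} (hMne : M.Nonempty)
    (hMs : M ⊆ Metric.sphere (0 : EuclideanSpace ℝ (Fin d)) 1)
    (hopen : IsOpen {x : EuclideanSpace ℝ (Fin d) | x ≠ 0 ∧ ‖x‖⁻¹ • x ∈ M}) :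
    (0 : EuclideanSpace ℝ (Fin d)) ∈
      frontier {x : EuclideanSpace ℝ (Fin d) | x ≠ 0 ∧ ‖x‖⁻¹ • x ∈ M} := by
  obtain ⟨y, hy⟩ := hMne
  have hny : ‖y‖ = 1 := by simpa [mem_sphere_zero_iff_norm] using hMs hy
  constructor
  · rw [Metric.mem_closure_iff]
    intro ε hε
    refine ⟨(ε/2) • y, ?_, ?_⟩
    · have hy0 : y ≠ 0 := by intro h; rw [h] at hny; simp at hny
      have hne : (ε/2) • y ≠ 0 := smul_ne_zero (by positivity) hy0
      refine ⟨hne, ?_⟩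
      have : ‖(ε/2) • y‖ = ε/2 := by
        rw [norm_smul, hny, Real.norm_eq_abs, abs_of_pos (by positivity), mul_one]
      rw [this, smul_smul, inv_mul_cancel₀ (by positivity), one_smul]
      exact hy
    · rw [dist_comm, dist_zero_right, norm_smul, hny, Real.norm_eq_abs,
        abs_of_pos (by positivity), mul_one]
      linarith
  · rw [hopen.interior_eq]
    intro h
    exact h.1 rfl

lemma rho_pos_of_mem {D : Set (EuclideanSpace ℝ (Fin d))} (hD : IsOpen D)
    (hfr : (frontier D).Nonempty) {x : EuclideanSpace ℝ (Fin d)} (hx : x ∈ D) :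
    0 < Metric.infDist x (frontier D) := by
  rw [← isClosed_frontier.notMem_iff_infDist_pos hfr]
  intro h
  rw [frontier, hD.interior_eq] at h
  exact h.2 hx

lemma psiPowBound (c₁ c₂ : ℝ) (hc₁ : 0 < c₁) (hc₂ : 0 < c₂) (C : ℕ → ℝ) (j : ℕ) :
    ∃ K : ℕ → ℝ → ℝ, (∀ i μ, 0 ≤ K i μ) ∧
      ∀ (D : Set (EuclideanSpace ℝ (Fin d))), IsOpen D →
      ∀ ψ : EuclideanSpace ℝ (Fin d) → ℝ, ContDiffOn ℝ (⊤ : ℕ∞) ψ D →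
      (∀ x ∈ D, 0 < Metric.infDist x (frontier D)) →
      (∀ x ∈ D, c₁ * Metric.infDist x (frontier D) ≤ ψ x ∧
        ψ x ≤ c₂ * Metric.infDist x (frontier D)) →
      (∀ k < j, ∀ x ∈ D,
        Metric.infDist x (frontier D) ^ k * ‖iteratedFDerivWithin ℝ (k+1) ψ D x‖ ≤ C k) →
      ∀ μ : ℝ, ∀ i ≤ j, ∀ x ∈ D,
        ‖iteratedFDerivWithin ℝ i (fun y => ψ y ^ μ) D x‖ ≤
          K i μ * Metric.infDist x (frontier D) ^ (μ - (i : ℝ)) := by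
  induction j with
  | zero =>
    refine ⟨fun _ μ => max (c₁ ^ μ) (c₂ ^ μ),
      fun i μ => le_max_of_le_left (Real.rpow_pos_of_pos hc₁ μ).le, ?_⟩
    intro D hD ψ hψ hρ hbd _ μ i hi x hx
    interval_cases i
    have hρx := hρ x hx
    have hψx : 0 < ψ x := lt_of_lt_of_le (mul_pos hc₁ hρx) (hbd x hx).1
    rw [norm_iteratedFDerivWithin_zero, Real.norm_eq_abs,
      abs_of_nonneg (Real.rpow_nonneg hψx.le μ)]
    simp only [Nat.cast_zero, sub_zero]
    rcases le_or_gt 0 μ with hμ | hμ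
    · calc ψ x ^ μ ≤ (c₂ * Metric.infDist x (frontier D)) ^ μ :=
            Real.rpow_le_rpow hψx.le (hbd x hx).2 hμ
        _ = c₂ ^ μ * Metric.infDist x (frontier D) ^ μ := Real.mul_rpow hc₂.le hρx.le
        _ ≤ max (c₁ ^ μ) (c₂ ^ μ) * Metric.infDist x (frontier D) ^ μ :=
            mul_le_mul_of_nonneg_right (le_max_right _ _) (Real.rpow_nonneg hρx.le μ)
    · calc ψ x ^ μ ≤ (c₁ * Metric.infDist x (frontier D)) ^ μ :=
            Real.rpow_le_rpow_of_nonpos (mul_pos hc₁ hρx) (hbd x hx).1 hμ.le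
        _ = c₁ ^ μ * Metric.infDist x (frontier D) ^ μ := Real.mul_rpow hc₁.le hρx.le
        _ ≤ max (c₁ ^ μ) (c₂ ^ μ) * Metric.infDist x (frontier D) ^ μ :=
            mul_le_mul_of_nonneg_right (le_max_left _ _) (Real.rpow_nonneg hρx.le μ)
  | succ j IH =>
    obtain ⟨K, hK0, hK⟩ := IH
    refine ⟨fun i μ => if i = j + 1 then
        (∑ q ∈ Finset.range (j+1), (j.choose q : ℝ) * (|μ| * K q (μ-1)) * max (C (j - q)) 0)
      else K i μ, ?_, ?_⟩
    · intro i μ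
      dsimp only
      split
      · refine Finset.sum_nonneg fun q _ => ?_
        have := hK0 q (μ-1)
        positivity
      · exact hK0 i μ
    intro D hD ψ hψ hρ hbd hC μ i hi x hx
    rcases Nat.lt_succ_iff_lt_or_eq.mp (Nat.lt_succ_of_le hi) with hij | rfl
    · have hij' : i ≤ j := by omega
      simp only [if_neg (by omega : ¬ i = j + 1)]
      exact hK D hD ψ hψ hρ hbd (fun k hk => hC k (by omega)) μ i hij' x hx
    · simp only [if_pos rfl]
      set ρ : EuclideanSpace ℝ (Fin d) → ℝ := fun y => Metric.infDist y (frontier D) with hρdef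
      have hUD : UniqueDiffOn ℝ D := hD.uniqueDiffOn
      have hψpos : ∀ y ∈ D, 0 < ψ y := fun y hy =>
        lt_of_lt_of_le (mul_pos hc₁ (hρ y hy)) (hbd y hy).1
      have hrpowCD : ∀ ν : ℝ, ContDiffOn ℝ (⊤ : ℕ∞) (fun y => ψ y ^ ν) D := fun ν y hy =>
        (hψ y hy).rpow_const_of_ne (hψpos y hy).ne'
      have hfd : Set.EqOn (fderivWithin ℝ (fun y => ψ y ^ μ) D)
          (fun y => (μ * ψ y ^ (μ-1)) • fderivWithin ℝ ψ D y) D := by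
        intro y hy
        exact ((hψ.differentiableOn (by simp) y
          hy).hasFDerivWithinAt.rpow_const (Or.inl (hψpos y hy).ne')).fderivWithin (hUD y hy)
      have hg : ContDiffOn ℝ ((⊤:ℕ∞) : WithTop ℕ∞) (fderivWithin ℝ ψ D) D :=
        hψ.fderivWithin hUD (by norm_cast)
      have hf : ContDiffOn ℝ ((⊤:ℕ∞) : WithTop ℕ∞) (fun y => μ * ψ y ^ (μ-1)) D :=
        contDiffOn_const.mul (hrpowCD (μ-1))
      have hρx := hρ x hx
      calc ‖iteratedFDerivWithin ℝ (j+1) (fun y => ψ y ^ μ) D x‖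
          = ‖iteratedFDerivWithin ℝ j (fderivWithin ℝ (fun y => ψ y ^ μ) D) D x‖ :=
            (norm_iteratedFDerivWithin_fderivWithin hUD hx).symm
        _ = ‖iteratedFDerivWithin ℝ j
              (fun y => (μ * ψ y ^ (μ-1)) • fderivWithin ℝ ψ D y) D x‖ := by
            rw [iteratedFDerivWithin_congr hfd hx]
        _ ≤ ∑ q ∈ Finset.range (j+1), (j.choose q : ℝ) *
              ‖iteratedFDerivWithin ℝ q (fun y => μ * ψ y ^ (μ-1)) D x‖ *
              ‖iteratedFDerivWithin ℝ (j - q) (fderivWithin ℝ ψ D) D x‖ :=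
            norm_iteratedFDerivWithin_smul_le hf hg hUD hx (by exact_mod_cast le_top)
        _ ≤ ∑ q ∈ Finset.range (j+1),
              ((j.choose q : ℝ) * (|μ| * K q (μ-1)) * max (C (j - q)) 0) * ρ x ^ (μ - (j+1 : ℕ)) := by
            refine Finset.sum_le_sum fun q hq => ?_
            have hqj : q ≤ j := by simpa [Nat.lt_succ_iff] using hq
            have h1 : ‖iteratedFDerivWithin ℝ q (fun y => μ * ψ y ^ (μ-1)) D x‖ ≤
                |μ| * (K q (μ-1) * ρ x ^ ((μ-1) - (q:ℝ))) := by
              have heq : (fun y => μ * ψ y ^ (μ-1)) = μ • (fun y => ψ y ^ (μ-1)) := rfl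
              rw [heq, iteratedFDerivWithin_const_smul_apply
                (((hrpowCD (μ-1)).of_le (by exact_mod_cast le_top)) x hx) hUD hx, norm_smul,
                Real.norm_eq_abs]
              exact mul_le_mul_of_nonneg_left
                (hK D hD ψ hψ hρ hbd (fun k hk => hC k (by omega)) (μ-1) q hqj x hx)
                (abs_nonneg μ)
            have h2 : ‖iteratedFDerivWithin ℝ (j - q) (fderivWithin ℝ ψ D) D x‖ ≤
                max (C (j - q)) 0 * ρ x ^ (-((j - q : ℕ) : ℝ)) := by
              rw [norm_iteratedFDerivWithin_fderivWithin hUD hx]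
              have hCb := hC (j - q) (by omega) x hx
              have hpow : (0:ℝ) < ρ x ^ (j - q) := pow_pos hρx _
              rw [Real.rpow_neg hρx.le, Real.rpow_natCast, ← div_eq_mul_inv, le_div_iff₀ hpow]
              calc ‖iteratedFDerivWithin ℝ (j - q + 1) ψ D x‖ * ρ x ^ (j - q)
                  = ρ x ^ (j - q) * ‖iteratedFDerivWithin ℝ (j - q + 1) ψ D x‖ := mul_comm _ _
                _ ≤ C (j - q) := hCb
                _ ≤ max (C (j - q)) 0 := le_max_left _ _
            calc (j.choose q : ℝ) *
                  ‖iteratedFDerivWithin ℝ q (fun y => μ * ψ y ^ (μ-1)) D x‖ *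
                  ‖iteratedFDerivWithin ℝ (j - q) (fderivWithin ℝ ψ D) D x‖
                ≤ (j.choose q : ℝ) * (|μ| * (K q (μ-1) * ρ x ^ ((μ-1) - (q:ℝ)))) *
                  (max (C (j - q)) 0 * ρ x ^ (-((j - q : ℕ) : ℝ))) := by
                  have hn1 : (0:ℝ) ≤ (j.choose q : ℝ) *
                      ‖iteratedFDerivWithin ℝ q (fun y => μ * ψ y ^ (μ-1)) D x‖ := by positivity
                  refine mul_le_mul ?_ h2 (norm_nonneg _) ?_
                  · exact mul_le_mul_of_nonneg_left h1 (Nat.cast_nonneg _)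
                  · have := hK0 q (μ-1)
                    positivity
              _ = ((j.choose q : ℝ) * (|μ| * K q (μ-1)) * max (C (j - q)) 0) *
                  (ρ x ^ ((μ-1) - (q:ℝ)) * ρ x ^ (-((j - q : ℕ) : ℝ))) := by ring
              _ = ((j.choose q : ℝ) * (|μ| * K q (μ-1)) * max (C (j - q)) 0) *
                  ρ x ^ (μ - ((j:ℝ)+1)) := by
                  rw [← Real.rpow_add hρx]
                  congr 1
                  have : ((j - q : ℕ) : ℝ) = (j : ℝ) - (q : ℝ) := by
                    rw [Nat.cast_sub hqj]
                  rw [this]; ring_nf; rfl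
              _ = ((j.choose q : ℝ) * (|μ| * K q (μ-1)) * max (C (j - q)) 0) *
                  ρ x ^ (μ - ((j+1 : ℕ) : ℝ)) := by push_cast; ring_nf
        _ = (∑ q ∈ Finset.range (j+1),
              (j.choose q : ℝ) * (|μ| * K q (μ-1)) * max (C (j - q)) 0) *
              ρ x ^ (μ - ((j+1 : ℕ) : ℝ)) := by
            rw [Finset.sum_mul]

lemma prodBound (c₁ c₂ : ℝ) (hc₁ : 0 < c₁) (hc₂ : 0 < c₂) (C : ℕ → ℝ) (m : ℕ) (μ : ℝ) :
    ∃ A : ℝ, 0 ≤ A ∧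
      ∀ (D : Set (EuclideanSpace ℝ (Fin d))), IsOpen D →
      ∀ ψ : EuclideanSpace ℝ (Fin d) → ℝ, ContDiffOn ℝ (⊤ : ℕ∞) ψ D →
      (∀ x ∈ D, 0 < Metric.infDist x (frontier D)) →
      (∀ x ∈ D, c₁ * Metric.infDist x (frontier D) ≤ ψ x ∧
        ψ x ≤ c₂ * Metric.infDist x (frontier D)) →
      (∀ k < m, ∀ x ∈ D,
        Metric.infDist x (frontier D) ^ k * ‖iteratedFDerivWithin ℝ (k+1) ψ D x‖ ≤ C k) →
      ∀ f : EuclideanSpace ℝ (Fin d) → ℝ, ContDiffOn ℝ (m : ℕ∞) f D →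
      ∀ k ≤ m, ∀ x ∈ D,
        Metric.infDist x (frontier D) ^ k *
            ‖iteratedFDerivWithin ℝ k (fun y => ψ y ^ μ * f y) D x‖ ≤
          A * Metric.infDist x (frontier D) ^ μ *
            ∑ i ∈ Finset.range (m+1),
              Metric.infDist x (frontier D) ^ i * ‖iteratedFDerivWithin ℝ i f D x‖ := by
  obtain ⟨K, hK0, hK⟩ := psiPowBound (d := d) c₁ c₂ hc₁ hc₂ C m
  refine ⟨∑ q ∈ Finset.range (m+1), ∑ i ∈ Finset.range (m+1), (q.choose i : ℝ) * K i μ,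
    Finset.sum_nonneg fun q _ => Finset.sum_nonneg fun i _ => by
      have := hK0 i μ; positivity, ?_⟩
  intro D hD ψ hψ hρ hbd hC f hf k hk x hx
  set ρ : EuclideanSpace ℝ (Fin d) → ℝ := fun y => Metric.infDist y (frontier D) with hρdef
  set A : ℝ := ∑ q ∈ Finset.range (m+1), ∑ i ∈ Finset.range (m+1), (q.choose i : ℝ) * K i μ
    with hAdef
  have hA0 : 0 ≤ A := Finset.sum_nonneg fun q _ => Finset.sum_nonneg fun i _ => by
    have := hK0 i μ; positivity
  have hUD : UniqueDiffOn ℝ D := hD.uniqueDiffOn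
  have hρx := hρ x hx
  have hψpos : ∀ y ∈ D, 0 < ψ y := fun y hy =>
    lt_of_lt_of_le (mul_pos hc₁ (hρ y hy)) (hbd y hy).1
  have hrpowCD : ContDiffOn ℝ ((k : ℕ) : WithTop ℕ∞) (fun y => ψ y ^ μ) D := fun y hy =>
    ((hψ y hy).rpow_const_of_ne (hψpos y hy).ne').of_le (by exact_mod_cast le_top)
  have hfk : ContDiffOn ℝ ((k : ℕ) : WithTop ℕ∞) f D := hf.of_le (by exact_mod_cast hk)
  have hmul := norm_iteratedFDerivWithin_mul_le (𝕜 := ℝ) hrpowCD hfk hUD hx (le_refl _)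
  have hcoef : ∀ i ≤ k, (k.choose i : ℝ) * K i μ ≤ A := by
    intro i hi
    have h1 : (k.choose i : ℝ) * K i μ ≤
        ∑ i ∈ Finset.range (m+1), (k.choose i : ℝ) * K i μ := by
      refine Finset.single_le_sum (f := fun i => (k.choose i : ℝ) * K i μ) (fun i _ => ?_)
        (Finset.mem_range.mpr (by omega : i < m + 1))
      have := hK0 i μ; positivity
    refine h1.trans ?_
    refine Finset.single_le_sum
      (f := fun q => ∑ i ∈ Finset.range (m+1), (q.choose i : ℝ) * K i μ)
      (fun q _ => Finset.sum_nonneg fun i _ => ?_)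
      (Finset.mem_range.mpr (by omega : k < m + 1))
    have := hK0 i μ; positivity
  have hterm : ∀ i ∈ Finset.range (k+1),
      ρ x ^ k * ((k.choose i : ℝ) * ‖iteratedFDerivWithin ℝ i (fun y => ψ y ^ μ) D x‖ *
        ‖iteratedFDerivWithin ℝ (k - i) f D x‖) ≤
      A * ρ x ^ μ * (ρ x ^ (k - i) * ‖iteratedFDerivWithin ℝ (k - i) f D x‖) := by
    intro i hi
    have hik : i ≤ k := by simpa [Nat.lt_succ_iff] using hi
    have h1 := hK D hD ψ hψ hρ hbd hC μ i (hik.trans hk) x hx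
    have hkey : ρ x ^ k * ρ x ^ (μ - (i:ℝ)) = ρ x ^ μ * ρ x ^ (k - i) := by
      rw [← Real.rpow_natCast (ρ x) k, ← Real.rpow_natCast (ρ x) (k - i),
        ← Real.rpow_add hρx, ← Real.rpow_add hρx]
      congr 1
      rw [Nat.cast_sub hik]; ring
    calc ρ x ^ k * ((k.choose i : ℝ) * ‖iteratedFDerivWithin ℝ i (fun y => ψ y ^ μ) D x‖ *
          ‖iteratedFDerivWithin ℝ (k - i) f D x‖)
        ≤ ρ x ^ k * ((k.choose i : ℝ) * (K i μ * ρ x ^ (μ - (i:ℝ))) *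
          ‖iteratedFDerivWithin ℝ (k - i) f D x‖) := by
          refine mul_le_mul_of_nonneg_left ?_ (by positivity)
          refine mul_le_mul_of_nonneg_right
            (mul_le_mul_of_nonneg_left h1 (Nat.cast_nonneg _)) (norm_nonneg _)
      _ = ((k.choose i : ℝ) * K i μ) * (ρ x ^ k * ρ x ^ (μ - (i:ℝ))) *
          ‖iteratedFDerivWithin ℝ (k - i) f D x‖ := by ring
      _ = ((k.choose i : ℝ) * K i μ) * ρ x ^ μ *
          (ρ x ^ (k - i) * ‖iteratedFDerivWithin ℝ (k - i) f D x‖) := by rw [hkey]; ring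
      _ ≤ A * ρ x ^ μ * (ρ x ^ (k - i) * ‖iteratedFDerivWithin ℝ (k - i) f D x‖) := by
          refine mul_le_mul_of_nonneg_right (mul_le_mul_of_nonneg_right (hcoef i hik)
            (Real.rpow_nonneg hρx.le μ)) (by positivity)
  calc ρ x ^ k * ‖iteratedFDerivWithin ℝ k (fun y => ψ y ^ μ * f y) D x‖
      ≤ ρ x ^ k * ∑ i ∈ Finset.range (k+1), (k.choose i : ℝ) *
          ‖iteratedFDerivWithin ℝ i (fun y => ψ y ^ μ) D x‖ *
          ‖iteratedFDerivWithin ℝ (k - i) f D x‖ :=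
        mul_le_mul_of_nonneg_left hmul (by positivity)
    _ = ∑ i ∈ Finset.range (k+1), ρ x ^ k * ((k.choose i : ℝ) *
          ‖iteratedFDerivWithin ℝ i (fun y => ψ y ^ μ) D x‖ *
          ‖iteratedFDerivWithin ℝ (k - i) f D x‖) := Finset.mul_sum _ _ _
    _ ≤ ∑ i ∈ Finset.range (k+1),
          A * ρ x ^ μ * (ρ x ^ (k - i) * ‖iteratedFDerivWithin ℝ (k - i) f D x‖) :=
        Finset.sum_le_sum hterm
    _ = A * ρ x ^ μ * ∑ i ∈ Finset.range (k+1),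
          ρ x ^ (k - i) * ‖iteratedFDerivWithin ℝ (k - i) f D x‖ := (Finset.mul_sum _ _ _).symm
    _ = A * ρ x ^ μ * ∑ i ∈ Finset.range (k+1),
          ρ x ^ i * ‖iteratedFDerivWithin ℝ i f D x‖ := by
        congr 1
        have := Finset.sum_range_reflect
          (fun i => ρ x ^ i * ‖iteratedFDerivWithin ℝ i f D x‖) (k+1)
        simpa using this
    _ ≤ A * ρ x ^ μ * ∑ i ∈ Finset.range (m+1),
          ρ x ^ i * ‖iteratedFDerivWithin ℝ i f D x‖ := by
        refine mul_le_mul_of_nonneg_left ?_ (by positivity)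
        refine Finset.sum_le_sum_of_subset_of_nonneg
          (Finset.range_subset_range.mpr (by omega)) (fun i _ _ => by positivity)

lemma Knorm_congr {d : ℕ} {D : Set (EuclideanSpace ℝ (Fin d))} (hD : MeasurableSet D)
    {f₁ f₂ : EuclideanSpace ℝ (Fin d) → ℝ} (h : Set.EqOn f₁ f₂ D) (p θ Θ : ℝ) (m : ℕ) :
    Knorm d D p θ Θ m f₁ = Knorm d D p θ Θ m f₂ := by
  unfold Knorm
  refine Finset.sum_congr rfl fun k _ => ?_
  congr 1
  refine setLIntegral_congr_fun hD (fun x hx => ?_)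
  simp only [iteratedFDerivWithin_congr h hx]

lemma rpow_sum_le {ι : Type*} (s : Finset ι) (f : ι → ℝ≥0∞) {r : ℝ} (h0 : 0 < r) (h1 : r ≤ 1) :
    (∑ i ∈ s, f i) ^ r ≤ ∑ i ∈ s, (f i) ^ r := by
  classical
  induction s using Finset.induction_on with
  | empty => simp [ENNReal.zero_rpow_of_pos h0]
  | insert a s' hns ih =>
    rw [Finset.sum_insert hns, Finset.sum_insert hns]
    exact (ENNReal.rpow_add_le_add_rpow _ _ h0.le h1).trans (add_le_add_right ih _)

lemma upperKnorm {d : ℕ} (p θ Θ μ : ℝ) (hp : 1 < p) (m : ℕ)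
    (c₁ c₂ : ℝ) (hc₁ : 0 < c₁) (hc₂ : 0 < c₂) (C : ℕ → ℝ) :
    ∃ N : ℝ, 1 ≤ N ∧
      ∀ (D : Set (EuclideanSpace ℝ (Fin d))), IsOpen D →
      (∀ x ∈ D, x ≠ 0) →
      (∀ x ∈ D, 0 < Metric.infDist x (frontier D)) →
      ∀ ψ : EuclideanSpace ℝ (Fin d) → ℝ, ContDiffOn ℝ (⊤ : ℕ∞) ψ D →
      (∀ x ∈ D, c₁ * bdist d D x ≤ ψ x ∧ ψ x ≤ c₂ * bdist d D x) →
      (∀ k < m, ∀ x ∈ D,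
        bdist d D x ^ k * ‖iteratedFDerivWithin ℝ (k+1) ψ D x‖ ≤ C k) →
      ∀ f : EuclideanSpace ℝ (Fin d) → ℝ, ContDiffOn ℝ (m : ℕ∞) f D →
      Knorm d D p θ Θ m (fun x => ψ x ^ μ * f x) ≤
        ENNReal.ofReal N * Knorm d D p (θ + μ * p) (Θ + μ * p) m f := by
  obtain ⟨A, hA0, hA⟩ := prodBound (d := d) c₁ c₂ hc₁ hc₂ C m μ
  have hp0 : (0:ℝ) < p := lt_trans one_pos hp
  set N₀ : ℝ := (A * (m+1)) ^ p with hN₀def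
  have hN₀0 : 0 ≤ N₀ := Real.rpow_nonneg (by positivity) p
  refine ⟨max 1 ((m+1) * N₀ ^ (1/p)), le_max_left _ _, ?_⟩
  intro D hD hD0 hρ ψ hψ hbd hC f hf
  have hUD : UniqueDiffOn ℝ D := hD.uniqueDiffOn
  set θ' : ℝ := θ + μ * p with hθ'
  set Θ' : ℝ := Θ + μ * p with hΘ'
  set g : ℕ → EuclideanSpace ℝ (Fin d) → ℝ≥0∞ := fun i x =>
    ENNReal.ofReal ((bdist d D x ^ i * ‖iteratedFDerivWithin ℝ i f D x‖) ^ p *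
      (‖x‖ ^ (θ' - Θ') * bdist d D x ^ (Θ' - (d : ℝ)))) with hgdef
  -- measurability
  have hbdist_cont : ContinuousOn (fun x => bdist d D x) D :=
    (Metric.continuous_infDist_pt (frontier D)).continuousOn
  have hmeas : ∀ i, i ≤ m → AEMeasurable (g i) (volume.restrict D) := by
    intro i hi
    have h2 : ContinuousOn (fun x => ‖iteratedFDerivWithin ℝ i f D x‖) D :=
      (hf.continuousOn_iteratedFDerivWithin (by exact_mod_cast hi) hUD).norm
    have hbase : ContinuousOn
        (fun x => (bdist d D x ^ i * ‖iteratedFDerivWithin ℝ i f D x‖) ^ p) D :=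
      ((hbdist_cont.pow i).mul h2).rpow_const (fun x _ => Or.inr hp0.le)
    have hw1 : ContinuousOn (fun x : EuclideanSpace ℝ (Fin d) => ‖x‖ ^ (θ' - Θ')) D :=
      continuous_norm.continuousOn.rpow_const
        (fun x hx => Or.inl (norm_ne_zero_iff.mpr (hD0 x hx)))
    have hw2 : ContinuousOn (fun x => bdist d D x ^ (Θ' - (d:ℝ))) D :=
      hbdist_cont.rpow_const (fun x hx => Or.inl (hρ x hx).ne')
    exact (ENNReal.continuous_ofReal.comp_continuousOn
      (hbase.mul (hw1.mul hw2))).aemeasurable hD.measurableSet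
  -- pointwise bound
  have hpt : ∀ k ≤ m, ∀ x ∈ D,
      ENNReal.ofReal ((bdist d D x ^ k *
          ‖iteratedFDerivWithin ℝ k (fun x => ψ x ^ μ * f x) D x‖) ^ p *
        (‖x‖ ^ (θ - Θ) * bdist d D x ^ (Θ - (d : ℝ)))) ≤
      ENNReal.ofReal N₀ * ∑ i ∈ Finset.range (m+1), g i x := by
    intro k hk x hx
    have hρx : 0 < bdist d D x := hρ x hx
    set ρx : ℝ := bdist d D x
    set a : ℕ → ℝ := fun i => ρx ^ i * ‖iteratedFDerivWithin ℝ i f D x‖ with hadef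
    have ha0 : ∀ i, 0 ≤ a i := fun i => by positivity
    set T : ℝ := (∑ i ∈ Finset.range (m+1), a i ^ p) ^ (1/p) with hTdef
    have hsum0 : (0:ℝ) ≤ ∑ i ∈ Finset.range (m+1), a i ^ p :=
      Finset.sum_nonneg fun i _ => Real.rpow_nonneg (ha0 i) p
    have hT0 : 0 ≤ T := Real.rpow_nonneg hsum0 _
    have haT : ∀ i ∈ Finset.range (m+1), a i ≤ T := by
      intro i hi
      have he : (a i ^ p) ^ (1/p) = a i := by
        rw [← Real.rpow_mul (ha0 i), mul_one_div_cancel hp0.ne', Real.rpow_one]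
      rw [← he]
      exact Real.rpow_le_rpow (Real.rpow_nonneg (ha0 i) p)
        (Finset.single_le_sum (fun j _ => Real.rpow_nonneg (ha0 j) p) hi) (by positivity)
    have hS : ∑ i ∈ Finset.range (m+1), a i ≤ (m+1) * T := by
      calc ∑ i ∈ Finset.range (m+1), a i ≤ ∑ _i ∈ Finset.range (m+1), T :=
            Finset.sum_le_sum haT
        _ = (m+1) * T := by rw [Finset.sum_const, Finset.card_range, nsmul_eq_mul]; push_cast; ring
    have h3 : ρx ^ k * ‖iteratedFDerivWithin ℝ k (fun x => ψ x ^ μ * f x) D x‖ ≤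
        A * ρx ^ μ * ∑ i ∈ Finset.range (m+1), a i :=
      hA D hD ψ hψ hρ hbd hC f hf k hk x hx
    have hTp : T ^ p = ∑ i ∈ Finset.range (m+1), a i ^ p := by
      rw [hTdef, ← Real.rpow_mul hsum0, one_div_mul_cancel hp0.ne', Real.rpow_one]
    have h4 : (ρx ^ k * ‖iteratedFDerivWithin ℝ k (fun x => ψ x ^ μ * f x) D x‖) ^ p ≤
        N₀ * (∑ i ∈ Finset.range (m+1), a i ^ p) * ρx ^ (μ * p) := by
      calc (ρx ^ k * ‖iteratedFDerivWithin ℝ k (fun x => ψ x ^ μ * f x) D x‖) ^ p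
          ≤ (A * (m+1) * T * ρx ^ μ) ^ p := by
            refine Real.rpow_le_rpow (by positivity) ?_ hp0.le
            calc ρx ^ k * ‖iteratedFDerivWithin ℝ k (fun x => ψ x ^ μ * f x) D x‖
                ≤ A * ρx ^ μ * ∑ i ∈ Finset.range (m+1), a i := h3
              _ ≤ A * ρx ^ μ * ((m+1) * T) := by
                  refine mul_le_mul_of_nonneg_left hS ?_
                  have := Real.rpow_nonneg hρx.le μ; positivity
              _ = A * (m+1) * T * ρx ^ μ := by ring
        _ = (A * (m+1) * T) ^ p * (ρx ^ μ) ^ p := by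
            rw [Real.mul_rpow (by positivity) (Real.rpow_nonneg hρx.le μ)]
        _ = (A * (m+1)) ^ p * T ^ p * (ρx ^ μ) ^ p := by
            rw [Real.mul_rpow (by positivity) hT0]
        _ = N₀ * (∑ i ∈ Finset.range (m+1), a i ^ p) * ρx ^ (μ * p) := by
            rw [hTp, ← Real.rpow_mul hρx.le, hN₀def]
    have hWW : ρx ^ (μ * p) * (‖x‖ ^ (θ - Θ) * ρx ^ (Θ - (d:ℝ))) =
        ‖x‖ ^ (θ' - Θ') * ρx ^ (Θ' - (d:ℝ)) := by
      have e1 : θ - Θ = θ' - Θ' := by rw [hθ', hΘ']; ring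
      have e2 : ρx ^ (μ * p) * ρx ^ (Θ - (d:ℝ)) = ρx ^ (Θ' - (d:ℝ)) := by
        rw [← Real.rpow_add hρx]; congr 1; rw [hΘ']; ring
      rw [mul_left_comm, e2, e1]
    have hreal : (ρx ^ k * ‖iteratedFDerivWithin ℝ k (fun x => ψ x ^ μ * f x) D x‖) ^ p *
        (‖x‖ ^ (θ - Θ) * ρx ^ (Θ - (d:ℝ))) ≤
        N₀ * ∑ i ∈ Finset.range (m+1),
          a i ^ p * (‖x‖ ^ (θ' - Θ') * ρx ^ (Θ' - (d:ℝ))) := by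
      calc (ρx ^ k * ‖iteratedFDerivWithin ℝ k (fun x => ψ x ^ μ * f x) D x‖) ^ p *
            (‖x‖ ^ (θ - Θ) * ρx ^ (Θ - (d:ℝ)))
          ≤ (N₀ * (∑ i ∈ Finset.range (m+1), a i ^ p) * ρx ^ (μ * p)) *
            (‖x‖ ^ (θ - Θ) * ρx ^ (Θ - (d:ℝ))) := by
            refine mul_le_mul_of_nonneg_right h4 ?_
            have h5 : (0:ℝ) ≤ ‖x‖ ^ (θ - Θ) := Real.rpow_nonneg (norm_nonneg x) _
            have h6 : (0:ℝ) ≤ ρx ^ (Θ - (d:ℝ)) := Real.rpow_nonneg hρx.le _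
            positivity
        _ = N₀ * ((∑ i ∈ Finset.range (m+1), a i ^ p) *
            (ρx ^ (μ * p) * (‖x‖ ^ (θ - Θ) * ρx ^ (Θ - (d:ℝ))))) := by ring
        _ = N₀ * ((∑ i ∈ Finset.range (m+1), a i ^ p) *
            (‖x‖ ^ (θ' - Θ') * ρx ^ (Θ' - (d:ℝ)))) := by rw [hWW]
        _ = N₀ * ∑ i ∈ Finset.range (m+1),
            a i ^ p * (‖x‖ ^ (θ' - Θ') * ρx ^ (Θ' - (d:ℝ))) := by rw [Finset.sum_mul]
    calc ENNReal.ofReal ((ρx ^ k *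
            ‖iteratedFDerivWithin ℝ k (fun x => ψ x ^ μ * f x) D x‖) ^ p *
          (‖x‖ ^ (θ - Θ) * ρx ^ (Θ - (d:ℝ))))
        ≤ ENNReal.ofReal (N₀ * ∑ i ∈ Finset.range (m+1),
            a i ^ p * (‖x‖ ^ (θ' - Θ') * ρx ^ (Θ' - (d:ℝ)))) := ENNReal.ofReal_le_ofReal hreal
      _ = ENNReal.ofReal N₀ * ∑ i ∈ Finset.range (m+1), g i x := by
          rw [ENNReal.ofReal_mul hN₀0, ENNReal.ofReal_sum_of_nonneg]
          intro i _
          have h5 : (0:ℝ) ≤ a i ^ p := Real.rpow_nonneg (ha0 i) p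
          have h6 : (0:ℝ) ≤ ‖x‖ ^ (θ' - Θ') := Real.rpow_nonneg (norm_nonneg x) _
          have h7 : (0:ℝ) ≤ ρx ^ (Θ' - (d:ℝ)) := Real.rpow_nonneg hρx.le _
          positivity
  -- putting it together
  have hp1 : (0:ℝ) < 1/p := by positivity
  have hp1' : (1:ℝ)/p ≤ 1 := by rw [div_le_one hp0]; exact hp.le
  calc Knorm d D p θ Θ m (fun x => ψ x ^ μ * f x)
      ≤ ∑ k ∈ Finset.range (m+1),
          (ENNReal.ofReal N₀ * ∑ i ∈ Finset.range (m+1), ∫⁻ x in D, g i x) ^ (1/p) := by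
        rw [Knorm]
        refine Finset.sum_le_sum fun k hk => ?_
        refine ENNReal.rpow_le_rpow ?_ hp1.le
        calc (∫⁻ x in D, ENNReal.ofReal ((bdist d D x ^ k *
                ‖iteratedFDerivWithin ℝ k (fun x => ψ x ^ μ * f x) D x‖) ^ p *
              (‖x‖ ^ (θ - Θ) * bdist d D x ^ (Θ - (d:ℝ)))))
            ≤ ∫⁻ x in D, (ENNReal.ofReal N₀ * ∑ i ∈ Finset.range (m+1), g i x) :=
              setLIntegral_mono' hD.measurableSet
                (hpt k (by simpa [Nat.lt_succ_iff] using hk))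
          _ = ENNReal.ofReal N₀ * ∑ i ∈ Finset.range (m+1), ∫⁻ x in D, g i x := by
              rw [lintegral_const_mul' _ _ ENNReal.ofReal_ne_top,
                lintegral_finset_sum' _ (fun i hi =>
                  hmeas i (by simpa [Nat.lt_succ_iff] using hi))]
    _ ≤ ∑ k ∈ Finset.range (m+1), (ENNReal.ofReal N₀) ^ (1/p) *
          ∑ i ∈ Finset.range (m+1), (∫⁻ x in D, g i x) ^ (1/p) := by
        refine Finset.sum_le_sum fun k _ => ?_
        rw [ENNReal.mul_rpow_of_nonneg _ _ hp1.le]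
        exact mul_le_mul_right (rpow_sum_le _ _ hp1 hp1') _
    _ = (m+1 : ℕ) * ((ENNReal.ofReal N₀) ^ (1/p) *
          Knorm d D p θ' Θ' m f) := by
        rw [Finset.sum_const, Finset.card_range, nsmul_eq_mul, Knorm]
    _ ≤ ENNReal.ofReal (max 1 ((m+1) * N₀ ^ (1/p))) * Knorm d D p θ' Θ' m f := by
        rw [← mul_assoc]
        refine mul_le_mul_left ?_ _
        rw [ENNReal.ofReal_rpow_of_nonneg hN₀0 hp1.le]
        calc ((m+1 : ℕ) : ℝ≥0∞) * ENNReal.ofReal (N₀ ^ (1/p))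
            = ENNReal.ofReal ((m+1 : ℕ) : ℝ) * ENNReal.ofReal (N₀ ^ (1/p)) := by
              rw [ENNReal.ofReal_natCast]
          _ = ENNReal.ofReal (((m+1 : ℕ) : ℝ) * N₀ ^ (1/p)) := by
              rw [ENNReal.ofReal_mul (by positivity)]
          _ ≤ ENNReal.ofReal (max 1 ((m+1) * N₀ ^ (1/p))) := by
              refine ENNReal.ofReal_le_ofReal ?_
              refine le_trans ?_ (le_max_right _ _)
              push_cast
              exact le_refl _

end StmtSixAux

/-- Let `d ≥ 2`, `p ∈ (1,∞)`, `θ, Θ, μ ∈ ℝ`, `m ∈ ℕ`, `0 < c₁ ≤ c₂` and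
`C₀, …, C_{m−1}` be given. Then there is `N ≥ 1`, depending only on
`d, p, m, θ, Θ, μ, c₁, c₂, C₀, …, C_{m−1}`, such that for any conic domain `D = D(M)`,
any infinitely differentiable `ψ : D → ℝ` with `c₁ ρ ≤ ψ ≤ c₂ ρ` on `D` and
`ρ^k ‖D^(k+1) ψ‖ ≤ C_k` on `D` for `k < m`, and any `f ∈ C^m(D)`,
`N⁻¹ ‖f‖_{K^m_{p,θ+μp,Θ+μp}(D)} ≤ ‖ψ^μ f‖_{K^m_{p,θ,Θ}(D)} ≤ N ‖f‖_{K^m_{p,θ+μp,Θ+μp}(D)}`. -/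
theorem stmt_6 (d : ℕ) (hd : 2 ≤ d) (p θ Θ μ : ℝ) (hp : 1 < p) (m : ℕ)
    (c₁ c₂ : ℝ) (hc₁ : 0 < c₁) (hc₁₂ : c₁ ≤ c₂) (C : ℕ → ℝ) :
    ∃ N : ℝ, 1 ≤ N ∧
      ∀ M : Set (EuclideanSpace ℝ (Fin d)), M.Nonempty →
        M ⊆ Metric.sphere (0 : EuclideanSpace ℝ (Fin d)) 1 →
        (∃ U : Set (EuclideanSpace ℝ (Fin d)),
          IsOpen U ∧ M = U ∩ Metric.sphere (0 : EuclideanSpace ℝ (Fin d)) 1) →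
        ¬ Metric.sphere (0 : EuclideanSpace ℝ (Fin d)) 1 ⊆ closure M →
        ∀ ψ : EuclideanSpace ℝ (Fin d) → ℝ,
          ContDiffOn ℝ (⊤ : ℕ∞) ψ (conicDomain d M) →
          (∀ x ∈ conicDomain d M,
            c₁ * bdist d (conicDomain d M) x ≤ ψ x ∧
              ψ x ≤ c₂ * bdist d (conicDomain d M) x) →
          (∀ k < m, ∀ x ∈ conicDomain d M,
            bdist d (conicDomain d M) x ^ k *
              ‖iteratedFDerivWithin ℝ (k + 1) ψ (conicDomain d M) x‖ ≤ C k) →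
          ∀ f : EuclideanSpace ℝ (Fin d) → ℝ,
            ContDiffOn ℝ (m : ℕ∞) f (conicDomain d M) →
            (ENNReal.ofReal N)⁻¹ *
                Knorm d (conicDomain d M) p (θ + μ * p) (Θ + μ * p) m f ≤
              Knorm d (conicDomain d M) p θ Θ m (fun x => ψ x ^ μ * f x) ∧
            Knorm d (conicDomain d M) p θ Θ m (fun x => ψ x ^ μ * f x) ≤
              ENNReal.ofReal N *
                Knorm d (conicDomain d M) p (θ + μ * p) (Θ + μ * p) m f := by
  have hc₂ : 0 < c₂ := lt_of_lt_of_le hc₁ hc₁₂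
  obtain ⟨N₁, hN₁, hU₁⟩ := upperKnorm (d := d) p θ Θ μ hp m c₁ c₂ hc₁ hc₂ C
  obtain ⟨N₂, hN₂, hU₂⟩ := upperKnorm (d := d) p (θ + μ * p) (Θ + μ * p) (-μ) hp m c₁ c₂ hc₁ hc₂ C
  refine ⟨max N₁ N₂, le_trans hN₁ (le_max_left _ _), ?_⟩
  intro M hMne hMs hMU _hcl ψ hψ hbd hC f hf
  set D := conicDomain d M with hDdef
  obtain ⟨U, hUopen, hMU⟩ := hMU
  have hDopen : IsOpen D := isOpen_conic hUopen hMU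
  have hD0 : ∀ x ∈ D, x ≠ 0 := fun x hx => hx.1
  have hfr : (frontier D).Nonempty := ⟨0, zero_mem_frontier_conic hMne hMs hDopen⟩
  have hρ : ∀ x ∈ D, 0 < Metric.infDist x (frontier D) := fun x hx =>
    rho_pos_of_mem hDopen hfr hx
  have hψpos : ∀ x ∈ D, 0 < ψ x := fun x hx =>
    lt_of_lt_of_le (mul_pos hc₁ (hρ x hx)) (hbd x hx).1
  have hofN : (1:ℝ≥0∞) ≤ ENNReal.ofReal (max N₁ N₂) := by
    rw [show (1:ℝ≥0∞) = ENNReal.ofReal 1 from (ENNReal.ofReal_one).symm]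
    exact ENNReal.ofReal_le_ofReal (le_trans hN₁ (le_max_left _ _))
  constructor
  · -- lower bound
    set g : EuclideanSpace ℝ (Fin d) → ℝ := fun x => ψ x ^ μ * f x with hgdef
    have hg : ContDiffOn ℝ (m : ℕ∞) g D := by
      have h1 : ContDiffOn ℝ (m : ℕ∞) (fun x => ψ x ^ μ) D := fun x hx =>
        ((hψ x hx).of_le (by exact_mod_cast le_top)).rpow_const_of_ne (hψpos x hx).ne'
      exact h1.mul hf
    have h2 := hU₂ D hDopen hD0 hρ ψ hψ hbd hC g hg
    rw [show θ + μ * p + -μ * p = θ from by ring, show Θ + μ * p + -μ * p = Θ from by ring] at h2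
    have h3 : Knorm d D p (θ + μ * p) (Θ + μ * p) m (fun x => ψ x ^ (-μ) * g x) =
        Knorm d D p (θ + μ * p) (Θ + μ * p) m f := by
      refine Knorm_congr hDopen.measurableSet (fun x hx => ?_) _ _ _ _
      show ψ x ^ (-μ) * (ψ x ^ μ * f x) = f x
      rw [← mul_assoc, ← Real.rpow_add (hψpos x hx), neg_add_cancel, Real.rpow_zero, one_mul]
    rw [h3] at h2
    have hne0 : ENNReal.ofReal (max N₁ N₂) ≠ 0 := by
      refine (ENNReal.ofReal_pos.mpr ?_).ne'
      exact lt_of_lt_of_le one_pos (le_trans hN₁ (le_max_left _ _))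
    calc (ENNReal.ofReal (max N₁ N₂))⁻¹ * Knorm d D p (θ + μ * p) (Θ + μ * p) m f
        ≤ (ENNReal.ofReal (max N₁ N₂))⁻¹ *
            (ENNReal.ofReal N₂ * Knorm d D p θ Θ m g) := mul_le_mul_right h2 _
      _ ≤ (ENNReal.ofReal (max N₁ N₂))⁻¹ *
            (ENNReal.ofReal (max N₁ N₂) * Knorm d D p θ Θ m g) :=
          mul_le_mul_right (mul_le_mul_left
            (ENNReal.ofReal_le_ofReal (le_max_right _ _)) _) _
      _ = ((ENNReal.ofReal (max N₁ N₂))⁻¹ * ENNReal.ofReal (max N₁ N₂)) *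
            Knorm d D p θ Θ m g := (mul_assoc _ _ _).symm
      _ = Knorm d D p θ Θ m g := by
          rw [ENNReal.inv_mul_cancel hne0 ENNReal.ofReal_ne_top, one_mul]
  · -- upper bound
    calc Knorm d D p θ Θ m (fun x => ψ x ^ μ * f x)
        ≤ ENNReal.ofReal N₁ * Knorm d D p (θ + μ * p) (Θ + μ * p) m f :=
          hU₁ D hDopen hD0 hρ ψ hψ hbd hC f hf
      _ ≤ ENNReal.ofReal (max N₁ N₂) * Knorm d D p (θ + μ * p) (Θ + μ * p) m f :=
          mul_le_mul_left (ENNReal.ofReal_le_ofReal (le_max_left _ _)) _
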